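/- Let p be an odd prime and q a prime with q ≡ 1 (mod p), and let r be an element of multiplicative order p in (ℤ/q)ˣ. For each pair (j,k) in {(1,0)} ∪ {(j,1) : 0 ≤ j ≤ p−1}, define on the set B = ℤ/p² × ℤ/q with componentwise addition + the operation (n,m) ∘ (s,t) = (n + (j·n·p + 1)·s, m + r^{k·n}·t) (the exponent k·n taken modulo p is well defined since r has order p). Then each (B_{(j,k)},+,∘) is a left brace with kernel of λ of order pq; (B_{(1,0)},∘) is cyclic of order p²q, while for each 0 ≤ j ≤ p−1 the group (B_{(j,1)},∘) is isomorphic to the semidirect product ℤ/q ⋊ ℤ/p² in which the generator 1 of ℤ/p² acts by multiplication by r. Moreover the p+1 left braces B_{(1,0)}, B_{(0,1)}, …, B_{(p−1,1)} are pairwise non-isomorphic as braces. -/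

import Mathlib

def y15 (c : ℕ) : ℕ → ℤ
  | 0 => 0
  | m+1 => (1 + c) * y15 c m + 1

lemma y15_add (c a b : ℕ) :
    y15 c (a + b) = y15 c a + y15 c b + c * (y15 c a * y15 c b) := by
  induction b with
  | zero => simp [y15]
  | succ b ih =>
      show y15 c (a + b + 1) = _
      rw [y15, ih, y15]
      ring

lemma y15_mod_p (p : ℕ) {c : ℕ} (hc : (p : ℤ) ∣ (c : ℤ)) (m : ℕ) :
    ((y15 c m : ℤ) : ZMod p) = (m : ZMod p) := by
  induction m with
  | zero => simp [y15]
  | succ m ih =>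
      rw [y15]
      push_cast
      have : ((c : ℤ) : ZMod p) = 0 := by
        obtain ⟨t, ht⟩ := hc
        rw [ht]; push_cast [ZMod.natCast_self]; ring
      push_cast at this ih ⊢
      rw [this] at *
      rw [ih]; ring

lemma mul_p_congr (p : ℕ) {x : ℤ} {m : ℕ} (h : ((x : ℤ) : ZMod p) = (m : ZMod p)) :
    (p : ZMod (p^2)) * (x : ZMod (p^2)) = (p : ZMod (p^2)) * m := by
  have : ((x - m : ℤ) : ZMod p) = 0 := by push_cast [h]; ring
  obtain ⟨t, ht⟩ := (ZMod.intCast_zmod_eq_zero_iff_dvd _ _).mp this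
  have h2 : (p : ℤ) * (x - m) = (p^2 : ℤ) * t := by rw [ht]; ring
  have := congrArg (Int.cast : ℤ → ZMod (p^2)) h2
  push_cast at this
  have hz : ((p:ZMod (p^2)))^2 = 0 := by
    have := ZMod.natCast_self (p^2); push_cast at this; linear_combination this
  linear_combination this + t * hz

lemma y15_mod_p2 (p j : ℕ) (m : ℕ) :
    ((y15 (j*p) m : ℤ) : ZMod (p^2)) = (m : ZMod (p^2)) + (j*p*(Nat.choose m 2) : ℕ) := by
  induction m with
  | zero => simp [y15]
  | succ m ih =>
      rw [y15]
      have hy := y15_mod_p p (c := j*p) (by push_cast; exact ⟨j, by ring⟩) m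
      have hmul := mul_p_congr (p := p) hy
      have hch : Nat.choose (m+1) 2 = Nat.choose m 2 + m := by
        rw [Nat.choose_succ_succ]
        simp [Nat.choose_one_right, Nat.add_comm]
      push_cast [hch]
      push_cast at ih hmul
      linear_combination ih + (j : ZMod (p^2)) * hmul

def F15 (p j : ℕ) (m : ℕ) : ZMod (p^2) := ((y15 (j*p) m : ℤ) : ZMod (p^2))

lemma hz15 (p : ℕ) : ((p : ZMod (p^2)))^2 = 0 := by
  have := ZMod.natCast_self (p^2); push_cast at this; linear_combination this

lemma F15_add (p j : ℕ) (a b : ℕ) :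
    F15 p j (a+b) = F15 p j a + ((j : ZMod (p^2)) * F15 p j a * p + 1) * F15 p j b := by
  unfold F15
  rw [y15_add]
  push_cast
  ring

lemma F15_zero (p j : ℕ) : F15 p j 0 = 0 := by simp [F15, y15]

lemma F15_p (p j : ℕ) (hpodd : Odd p) : F15 p j p = (p : ZMod (p^2)) := by
  unfold F15
  rw [y15_mod_p2]
  obtain ⟨t, ht⟩ := hpodd
  have hch : Nat.choose p 2 = p * t := by
    rw [Nat.choose_two_right, ht]
    have h1 : 2*t+1-1 = 2*t := by omega
    rw [h1, show (2*t+1)*(2*t) = ((2*t+1)*t)*2 by ring, Nat.mul_div_cancel _ (by norm_num)]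
  rw [hch]
  have : ((j*p*(p*t) : ℕ) : ZMod (p^2)) = 0 := by
    push_cast
    linear_combination ((j : ZMod (p^2)) * t) * hz15 p
  rw [this, add_zero]

lemma F15_p_mul (p j : ℕ) (hpodd : Odd p) (d : ℕ) :
    F15 p j (p * d) = ((p * d : ℕ) : ZMod (p^2)) := by
  induction d with
  | zero => simpa using F15_zero p j
  | succ d ih =>
      have : p * (d+1) = p * d + p := by ring
      rw [this, F15_add, ih, F15_p p j hpodd]
      push_cast
      linear_combination ((j:ZMod (p^2)) * d * p) * hz15 p

lemma F15_sq (p j : ℕ) (hpodd : Odd p) : F15 p j (p^2) = 0 := by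
  rw [show F15 p j (p^2) = F15 p j (p*p) from congrArg _ (sq p), F15_p_mul p j hpodd]
  push_cast
  linear_combination hz15 p

lemma F15_mod (p j : ℕ) (hpodd : Odd p) (a : ℕ) :
    F15 p j a = F15 p j (a % p^2) := by
  conv_lhs => rw [← Nat.mod_add_div a (p^2)]
  rw [add_comm, F15_add]
  have h0 : F15 p j (p^2 * (a / p^2)) = 0 := by
    rw [show p^2 * (a/p^2) = p * (p * (a/p^2)) by ring, F15_p_mul p j hpodd]
    push_cast
    linear_combination (((a/p^2) : ZMod (p^2))) * hz15 p
  rw [h0]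
  ring

lemma F15_castp (p j : ℕ) (hp : 0 < p) (a : ℕ) :
    (((F15 p j a).val : ℕ) : ZMod p) = (a : ZMod p) := by
  haveI : NeZero (p^2) := ⟨by positivity⟩
  have hdvd : p ∣ p^2 := ⟨p, sq p⟩
  have h1 : (((F15 p j a).val : ℕ) : ZMod p) = ZMod.castHom hdvd (ZMod p) (F15 p j a) := by
    conv_rhs => rw [← ZMod.natCast_rightInverse (F15 p j a)]
    rw [map_natCast]
  have h2 : ZMod.castHom hdvd (ZMod p) (F15 p j a) = (a : ZMod p) := by
    unfold F15
    rw [map_intCast]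
    exact y15_mod_p p ⟨j, by push_cast; ring⟩ a
  rw [h1, h2]

lemma F15_eq_zero (p j : ℕ) (hp : 1 < p) (hpodd : Odd p) {a : ℕ} (ha : a < p^2)
    (h : F15 p j a = 0) : a = 0 := by
  haveI : NeZero (p^2) := ⟨by positivity⟩
  have h0 : ((a : ℕ) : ZMod p) = 0 := by
    rw [← F15_castp p j (by omega) a, h]
    simp [ZMod.val_zero]
  obtain ⟨d, hd⟩ := (ZMod.natCast_eq_zero_iff a p).mp h0
  subst hd
  rw [F15_p_mul p j hpodd] at h
  obtain ⟨e, he⟩ := (ZMod.natCast_eq_zero_iff (p*d) (p^2)).mp h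
  have hdp : d < p := by nlinarith
  have hde : d = p * e := Nat.eq_of_mul_eq_mul_left (show 0 < p by omega)
    (show p * d = p * (p * e) by rw [he]; ring)
  have he0 : e = 0 := by nlinarith
  simp [hde, he0]

lemma c1_cancel (p j : ℕ) {u v w : ZMod (p^2)}
    (h : u + ((j : ZMod (p^2))*u*(p : ZMod (p^2))+1)*w = v + ((j : ZMod (p^2))*v*(p : ZMod (p^2))+1)*w) :
    u = v := by
  linear_combination (1 - (j:ZMod (p^2))*(p:ZMod (p^2))*w) * h + ((j:ZMod (p^2))^2*w^2*(u-v)) * hz15 p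

def E15 (p j : ℕ) (x : ZMod (p^2)) : ZMod (p^2) := F15 p j x.val

lemma E15_hom (p j : ℕ) (hp : 0 < p) (hpodd : Odd p) (x y : ZMod (p^2)) :
    E15 p j (x + y) = E15 p j x + ((j : ZMod (p^2)) * E15 p j x * (p : ZMod (p^2)) + 1) * E15 p j y := by
  haveI : NeZero (p^2) := ⟨by positivity⟩
  unfold E15
  rw [ZMod.val_add, ← F15_mod p j hpodd, F15_add]

lemma E15_inj (p j : ℕ) (hp : 1 < p) (hpodd : Odd p) : Function.Injective (E15 p j) := by
  haveI : NeZero (p^2) := ⟨by positivity⟩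
  intro a b h
  have key : ∀ a b : ZMod (p^2), a.val ≤ b.val → E15 p j a = E15 p j b → a = b := by
    intro a b hle h
    have hd : (b.val - a.val) + a.val = b.val := by omega
    have h2 : F15 p j ((b.val - a.val) + a.val) = F15 p j b.val := by rw [hd]
    rw [F15_add] at h2
    unfold E15 at h
    rw [h] at h2
    have h3 : F15 p j (b.val - a.val) + ((j : ZMod (p^2)) * F15 p j (b.val - a.val) * (p : ZMod (p^2)) + 1) * F15 p j b.val
        = 0 + ((j : ZMod (p^2)) * 0 * (p : ZMod (p^2)) + 1) * F15 p j b.val := by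
      rw [h2]; ring
    have h4 := c1_cancel p j h3
    have h5 : b.val - a.val = 0 := F15_eq_zero p j hp hpodd (by have := ZMod.val_lt b; omega) h4
    exact ZMod.val_injective _ (by omega)
  rcases le_total a.val b.val with hle | hle
  · exact key a b hle h
  · exact (key b a hle h.symm).symm

lemma rpow_congr (p q : ℕ) (hp : 0 < p) (r : (ZMod q)ˣ) (hr : orderOf r = p)
    {a b : ℕ} (h : (a : ZMod p) = (b : ZMod p)) (k : ℕ) :
    ((r : ZMod q))^(k*a) = ((r : ZMod q))^(k*b) := by
  have hmod : a ≡ b [MOD p] := (ZMod.natCast_eq_natCast_iff _ _ _).mp h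
  have hu : r^(k*a) = r^(k*b) := by
    rw [pow_eq_pow_iff_modEq, hr]
    exact hmod.mul_left k
  calc ((r : ZMod q))^(k*a) = ((r^(k*a) : (ZMod q)ˣ) : ZMod q) := by rw [Units.val_pow_eq_pow_val]
    _ = ((r^(k*b) : (ZMod q)ˣ) : ZMod q) := by rw [hu]
    _ = ((r : ZMod q))^(k*b) := by rw [Units.val_pow_eq_pow_val]

lemma E15_def (p j : ℕ) (x : ZMod (p^2)) : E15 p j x = F15 p j x.val := rfl

/-- `f` is a left-brace multiplication on the abelian group `B`: `(B, f)` is a group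
with identity `0` and `f a (b + c) = f a b - a + f a c` holds. -/
def IsLeftBrace {B : Type*} [AddCommGroup B] (f : B → B → B) : Prop :=
  (∀ a b c, f (f a b) c = f a (f b c)) ∧
  (∀ a, f 0 a = a) ∧
  (∀ a, f a 0 = a) ∧
  (∀ a, ∃ a', f a' a = 0) ∧
  (∀ a b c, f a (b + c) = f a b - a + f a c)

/-- The kernel of `λ`: the set of `a` with `λ_a = id`, i.e. `a ∘ b = a + b` for all `b`. -/
def kerLambda {B : Type*} [AddCommGroup B] (f : B → B → B) : Set B :=
  {a | ∀ b, f a b = a + b}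

/-- The circle operation `(n,m) ∘ (s,t) = (n + (j n p + 1) s, m + r^{k n} t)` on
`ℤ/p² × ℤ/q`, where `r` is a unit of `ℤ/q` of order `p` (so that the exponent `k n`
only matters modulo `p`). -/
def circ15 (p q : ℕ) (r : (ZMod q)ˣ) (j k : ℕ) :
    ZMod (p ^ 2) × ZMod q → ZMod (p ^ 2) × ZMod q → ZMod (p ^ 2) × ZMod q :=
  fun x y => (x.1 + ((j : ZMod (p ^ 2)) * x.1 * (p : ZMod (p ^ 2)) + 1) * y.1,
              x.2 + (r : ZMod q) ^ (k * (x.1).val) * y.2)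

/-- Let `p` be an odd prime, `q` a prime with `q ≡ 1 (mod p)`, and `r` an element of
order `p` in `(ℤ/q)ˣ`.  For `(j,k) ∈ {(1,0)} ∪ {(j,1) : 0 ≤ j ≤ p-1}`, the operation
`(n,m) ∘ (s,t) = (n + (j n p + 1) s, m + r^{k n} t)` on `B = ℤ/p² × ℤ/q` makes
`(B_{(j,k)},+,∘)` a left brace with `|ker λ| = pq`; `(B_{(1,0)},∘)` is cyclic of
order `p²q`; each `(B_{(j,1)},∘)` is isomorphic to `ℤ/q ⋊ ℤ/p²` with the generator
`1` of `ℤ/p²` acting by multiplication by `r`; and these `p + 1` left braces are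
pairwise non-isomorphic. -/
theorem stmt_15 (p q : ℕ) (hp : p.Prime) (hpodd : Odd p) (hq : q.Prime)
    (hmod : q ≡ 1 [MOD p]) (r : (ZMod q)ˣ) (hr : orderOf r = p) :
    (∀ j k : ℕ, ((j, k) = (1, 0) ∨ (k = 1 ∧ j ≤ p - 1)) →
      IsLeftBrace (circ15 p q r j k) ∧
      Nat.card ↥(kerLambda (circ15 p q r j k)) = p * q) ∧
    (∃ e : ZMod (p ^ 2) × ZMod q ≃ ZMod (p ^ 2 * q),
      ∀ a b, e (circ15 p q r 1 0 a b) = e a + e b) ∧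
    (∀ j : ℕ, j ≤ p - 1 →
      ∃ e : ZMod (p ^ 2) × ZMod q ≃ ZMod q × ZMod (p ^ 2),
        ∀ a b, e (circ15 p q r j 1 a b) =
          ((e a).1 + (r : ZMod q) ^ ((e a).2).val * (e b).1, (e a).2 + (e b).2)) ∧
    (∀ j k j' k' : ℕ, ((j, k) = (1, 0) ∨ (k = 1 ∧ j ≤ p - 1)) →
      ((j', k') = (1, 0) ∨ (k' = 1 ∧ j' ≤ p - 1)) → (j, k) ≠ (j', k') →
      ¬ ∃ e : ZMod (p ^ 2) × ZMod q ≃ ZMod (p ^ 2) × ZMod q,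
          (∀ a b, e (a + b) = e a + e b) ∧
          ∀ a b, e (circ15 p q r j k a b) = circ15 p q r j' k' (e a) (e b)) := by
  have hp1 : 1 < p := hp.one_lt
  have hp0 : 0 < p := by omega
  haveI : NeZero p := ⟨by omega⟩
  haveI : NeZero (p^2) := ⟨by positivity⟩
  haveI : NeZero q := ⟨hq.pos.ne'⟩
  have hz : ((p : ZMod (p^2)))^2 = 0 := hz15 p
  haveI : Fact (1 < p^2) := ⟨by nlinarith⟩
  have hpq : p ≠ q := by
    intro h
    have h1 : q % p = 1 % p := hmod
    rw [← h, Nat.mod_self, Nat.mod_eq_of_lt hp1] at h1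
    omega
  -- the canonical projection
  have hdvd : p ∣ p^2 := ⟨p, sq p⟩
  set π : ZMod (p^2) →+* ZMod p := ZMod.castHom hdvd (ZMod p) with hπ
  have hπval : ∀ z : ZMod (p^2), ((z.val : ℕ) : ZMod p) = π z := by
    intro z
    conv_rhs => rw [← ZMod.natCast_rightInverse z]
    rw [map_natCast]
  have hπp : π (p : ZMod (p^2)) = 0 := by rw [map_natCast, ZMod.natCast_self]
  have hexp : ∀ (k : ℕ) (z w : ZMod (p^2)), π z = π w →
      (r : ZMod q)^(k * z.val) = (r : ZMod q)^(k * w.val) := by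
    intro k z w h
    exact rpow_congr p q hp0 r hr (by rw [hπval, hπval, h]) k
  -- exponent is additive
  have hexpadd : ∀ (k : ℕ) (z w : ZMod (p^2)),
      (r : ZMod q)^(k * (z + w).val) = (r : ZMod q)^(k * z.val) * (r : ZMod q)^(k * w.val) := by
    intro k z w
    have h1 : (r : ZMod q)^(k * (z+w).val) = (r : ZMod q)^(k * (z.val + w.val)) := by
      have : (((z+w).val : ℕ) : ZMod p) = ((z.val + w.val : ℕ) : ZMod p) := by
        push_cast
        rw [hπval, hπval, hπval, map_add]
      rw [rpow_congr p q hp0 r hr this k]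
    rw [h1, mul_add, pow_add]
  -- `p * X = 0` in `ZMod p²` forces `π X = 0`
  have hpmul : ∀ X : ZMod (p^2), (p : ZMod (p^2)) * X = 0 → π X = 0 := by
    intro X h
    have h1 : (((p * X.val : ℕ) : ZMod (p^2))) = 0 := by
      push_cast
      rw [ZMod.natCast_rightInverse X]
      exact h
    obtain ⟨t, ht⟩ := (ZMod.natCast_eq_zero_iff _ _).mp h1
    have h2 : p ∣ X.val := ⟨t, by nlinarith [ht]⟩
    rw [← hπval]
    exact (ZMod.natCast_eq_zero_iff _ _).mpr h2
  have hval1 : (1 : ZMod (p^2)).val = 1 := ZMod.val_one _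
  have hrne1 : (r : ZMod q) ≠ 1 := by
    intro h
    have : r = 1 := Units.ext (by simpa using h)
    rw [this, orderOf_one] at hr
    omega
  refine ⟨?_, ?_, ?_, ?_⟩
  · -- part 1
    intro j k hjk
    constructor
    · refine ⟨?_, ?_, ?_, ?_, ?_⟩
      · -- associativity
        intro a b c
        unfold circ15
        refine Prod.ext ?_ ?_
        · simp only
          ring
        · simp only
          have h1 : (r : ZMod q)^(k * ((a.1 + ((j : ZMod (p^2)) * a.1 * (p : ZMod (p^2)) + 1) * b.1)).val)
            = (r : ZMod q)^(k * ((a.1 + b.1)).val) := by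
            apply hexp
            simp only [map_add, map_mul, map_one, map_natCast, ZMod.natCast_self]
            ring
          rw [h1, hexpadd k a.1 b.1]
          ring
      · intro a
        unfold circ15
        simp [ZMod.val_zero, Prod.ext_iff]
      · intro a
        unfold circ15
        simp [Prod.ext_iff]
      · -- inverses
        intro a
        set s : ZMod (p^2) := -a.1 + (j : ZMod (p^2)) * (p : ZMod (p^2)) * a.1^2 with hs
        refine ⟨(s, -((r : ZMod q)^(k * s.val) * a.2)), ?_⟩
        unfold circ15
        refine Prod.ext ?_ ?_
        · simp only [Prod.fst_zero, hs]
          linear_combination ((j : ZMod (p^2))^2 * a.1^3) * hz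
        · simp only [Prod.snd_zero]
          ring
      · intro a b c
        unfold circ15
        refine Prod.ext ?_ ?_ <;>
          simp only [Prod.fst_add, Prod.snd_add, Prod.fst_sub, Prod.snd_sub] <;> ring
    · -- kernel cardinality
      have hker : kerLambda (circ15 p q r j k) = {x : ZMod (p^2) × ZMod q | p ∣ x.1.val} := by
        ext x
        obtain ⟨n, m⟩ := x
        simp only [kerLambda, Set.mem_setOf_eq]
        constructor
        · intro h
          rcases hjk with h1 | ⟨hk, hj⟩
          · obtain ⟨hj, hk⟩ : j = 1 ∧ k = 0 := by simpa [Prod.ext_iff] using h1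
            subst hj hk
            have h2 := congrArg Prod.fst (h (1, 0))
            simp only [circ15, Prod.fst_add] at h2
            have h3 : (p : ZMod (p^2)) * n = 0 := by linear_combination h2
            have h4 := hpmul n h3
            rw [← hπval] at h4
            exact (ZMod.natCast_eq_zero_iff _ _).mp h4
          · subst hk
            have h2 := congrArg Prod.snd (h (0, 1))
            simp only [circ15, Prod.snd_add] at h2
            have h3 : (r : ZMod q) ^ (1 * n.val) = 1 := by linear_combination h2
            rw [one_mul] at h3
            have h4 : r ^ n.val = 1 := Units.ext (by rw [Units.val_pow_eq_pow_val]; exact h3)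
            have h6 := orderOf_dvd_of_pow_eq_one h4
            rwa [hr] at h6
        · intro hdvd b
          obtain ⟨d, hd⟩ := hdvd
          have hn : n = ((p * d : ℕ) : ZMod (p^2)) := by
            rw [← hd, ZMod.natCast_rightInverse n]
          have hjn : (j : ZMod (p^2)) * n * (p : ZMod (p^2)) = 0 := by
            rw [hn]
            push_cast
            linear_combination ((j : ZMod (p^2)) * (d : ZMod (p^2))) * hz
          have h5 : r ^ (k * n.val) = 1 :=
            orderOf_dvd_iff_pow_eq_one.mp
              (by rw [hr]; exact Dvd.dvd.mul_left (⟨d, hd⟩ : p ∣ n.val) k)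
          have hre : (r : ZMod q) ^ (k * n.val) = 1 := by
            rw [← Units.val_pow_eq_pow_val, h5, Units.val_one]
          unfold circ15
          simp only [hjn, hre, Prod.ext_iff]
          constructor
          · simp [Prod.fst_add]
          · simp [Prod.snd_add]
      rw [hker]
      have hequiv : (ZMod p × ZMod q) ≃ {x : ZMod (p^2) × ZMod q | p ∣ x.1.val} := by
        refine Equiv.ofBijective
          (fun am => ⟨(((p * am.1.val : ℕ) : ZMod (p^2)), am.2), ?_⟩) ⟨?_, ?_⟩
        · show p ∣ (((p * am.1.val : ℕ) : ZMod (p^2))).val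
          rw [ZMod.val_cast_of_lt (by nlinarith [ZMod.val_lt am.1])]
          exact ⟨am.1.val, rfl⟩
        · intro a a' hfe
          simp only [Subtype.mk.injEq, Prod.mk.injEq] at hfe
          obtain ⟨h1, h2⟩ := hfe
          have hv := congrArg ZMod.val h1
          rw [ZMod.val_cast_of_lt (by nlinarith [ZMod.val_lt a.1]),
            ZMod.val_cast_of_lt (by nlinarith [ZMod.val_lt a'.1])] at hv
          have : a.1.val = a'.1.val := Nat.eq_of_mul_eq_mul_left hp0 hv
          exact Prod.ext (ZMod.val_injective _ this) h2
        · rintro ⟨⟨n, m⟩, ⟨d, hd⟩⟩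
          have hdp : d < p := by nlinarith [ZMod.val_lt n]
          refine ⟨((d : ZMod p), m), ?_⟩
          simp only [Subtype.mk.injEq, Prod.mk.injEq]
          refine ⟨?_, trivial⟩
          rw [ZMod.val_cast_of_lt hdp, ← hd, ZMod.natCast_rightInverse n]
      rw [← Nat.card_congr hequiv]
      simp [Nat.card_prod, Nat.card_zmod]

  · -- part 2 : B_{(1,0)} is cyclic
    have hcop : Nat.Coprime (p^2) q := ((Nat.coprime_primes hp hq).mpr hpq).pow_left 2
    have hbij : Function.Bijective (E15 p 1) :=
      Finite.injective_iff_bijective.mp (E15_inj p 1 hp1 hpodd)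
    set σ : ZMod (p^2) ≃ ZMod (p^2) := Equiv.ofBijective _ hbij with hσ
    set crt := ZMod.chineseRemainder hcop with hcrt
    refine ⟨(Equiv.prodCongr σ.symm (Equiv.refl (ZMod q))).trans crt.toEquiv.symm, ?_⟩
    intro a b
    have key : ∀ x y : ZMod (p^2),
        σ.symm (x + (((1 : ℕ) : ZMod (p^2)) * x * (p : ZMod (p^2)) + 1) * y)
          = σ.symm x + σ.symm y := by
      intro x y
      apply σ.injective
      rw [Equiv.apply_symm_apply]
      have h1 : σ (σ.symm x + σ.symm y)
          = E15 p 1 (σ.symm x) + (((1:ℕ) : ZMod (p^2)) * E15 p 1 (σ.symm x) * (p : ZMod (p^2)) + 1)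
            * E15 p 1 (σ.symm y) := E15_hom p 1 hp0 hpodd _ _
      rw [h1]
      have hx : E15 p 1 (σ.symm x) = x := σ.apply_symm_apply x
      have hy : E15 p 1 (σ.symm y) = y := σ.apply_symm_apply y
      rw [hx, hy]
    have he : ∀ x : ZMod (p^2) × ZMod q,
        ((Equiv.prodCongr σ.symm (Equiv.refl (ZMod q))).trans crt.toEquiv.symm) x
          = crt.symm (σ.symm x.1, x.2) := fun x => rfl
    rw [he, he, he, ← map_add crt.symm]
    congr 1
    refine Prod.ext ?_ ?_
    · show σ.symm ((circ15 p q r 1 0 a b).1) = σ.symm a.1 + σ.symm b.1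
      unfold circ15
      exact key a.1 b.1
    · show (circ15 p q r 1 0 a b).2 = a.2 + b.2
      unfold circ15
      simp
  · -- part 3 : semidirect product structure
    intro j hj
    have hbij : Function.Bijective (E15 p j) :=
      Finite.injective_iff_bijective.mp (E15_inj p j hp1 hpodd)
    set σ : ZMod (p^2) ≃ ZMod (p^2) := Equiv.ofBijective _ hbij with hσ
    refine ⟨(Equiv.prodComm _ _).trans (Equiv.prodCongr (Equiv.refl (ZMod q)) σ.symm), ?_⟩
    intro a b
    have he : ∀ x : ZMod (p^2) × ZMod q,
        ((Equiv.prodComm _ _).trans (Equiv.prodCongr (Equiv.refl (ZMod q)) σ.symm)) x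
          = (x.2, σ.symm x.1) := fun x => rfl
    rw [he, he, he]
    have key : ∀ x y : ZMod (p^2),
        σ.symm (x + ((j : ZMod (p^2)) * x * (p : ZMod (p^2)) + 1) * y)
          = σ.symm x + σ.symm y := by
      intro x y
      apply σ.injective
      rw [Equiv.apply_symm_apply]
      have h1 : σ (σ.symm x + σ.symm y)
          = E15 p j (σ.symm x) + ((j : ZMod (p^2)) * E15 p j (σ.symm x) * (p : ZMod (p^2)) + 1)
            * E15 p j (σ.symm y) := E15_hom p j hp0 hpodd _ _
      rw [h1, (show E15 p j (σ.symm x) = x from σ.apply_symm_apply x),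
        (show E15 p j (σ.symm y) = y from σ.apply_symm_apply y)]
    have hexp3 : (r : ZMod q) ^ ((1:ℕ) * a.1.val) = (r : ZMod q) ^ ((1:ℕ) * (σ.symm a.1).val) := by
      apply rpow_congr p q hp0 r hr
      have h2 : a.1 = F15 p j (σ.symm a.1).val := by
        rw [← E15_def]
        exact (σ.apply_symm_apply a.1).symm
      exact (congrArg (fun z : ZMod (p^2) => ((z.val : ℕ) : ZMod p)) h2).trans
        (F15_castp p j hp0 _)
    refine Prod.ext ?_ ?_
    · show (circ15 p q r j 1 a b).2 = a.2 + (r : ZMod q) ^ (σ.symm a.1).val * b.2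
      unfold circ15
      simp only
      rw [hexp3, one_mul]
    · show σ.symm ((circ15 p q r j 1 a b).1) = σ.symm a.1 + σ.symm b.1
      unfold circ15
      exact key a.1 b.1
  · -- part 4 : pairwise non-isomorphic
    haveI := Fact.mk hq
    have hcomm : ∀ x y, circ15 p q r 1 0 x y = circ15 p q r 1 0 y x := by
      intro x y
      unfold circ15
      refine Prod.ext ?_ ?_
      · simp only
        push_cast
        ring
      · simp only [zero_mul, pow_zero]
        ring
    have hkey10 : ∀ (j' : ℕ) (e : ZMod (p^2) × ZMod q ≃ ZMod (p^2) × ZMod q),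
        (∀ a b, e (circ15 p q r 1 0 a b) = circ15 p q r j' 1 (e a) (e b)) → False := by
      intro j' e hcirc
      have h1 := hcirc (e.symm (1, 0)) (e.symm (0, 1))
      have h2 := hcirc (e.symm (0, 1)) (e.symm (1, 0))
      have h3 : circ15 p q r j' 1 (e (e.symm (1,0))) (e (e.symm (0,1)))
          = circ15 p q r j' 1 (e (e.symm (0,1))) (e (e.symm (1,0))) := by
        rw [← h1, ← h2, hcomm]
      rw [e.apply_symm_apply, e.apply_symm_apply] at h3
      have h4 := congrArg Prod.snd h3
      unfold circ15 at h4
      simp only [hval1, ZMod.val_zero, mul_one, mul_zero, pow_one, zero_add, add_zero] at h4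
      exact hrne1 (by simpa using h4)
    rintro j k j' k' hjk hj'k' hne ⟨e, hadd, hcirc⟩
    rcases hjk with h1 | ⟨hk, hj⟩
    · rcases hj'k' with h1' | ⟨hk', hj'⟩
      · exact hne (h1.trans h1'.symm)
      · obtain ⟨hj1, hk0⟩ : j = 1 ∧ k = 0 := by simpa [Prod.ext_iff] using h1
        subst hj1 hk0 hk'
        exact hkey10 j' e hcirc
    · rcases hj'k' with h1' | ⟨hk', hj'⟩
      · obtain ⟨hj1, hk0⟩ : j' = 1 ∧ k' = 0 := by simpa [Prod.ext_iff] using h1'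
        subst hj1 hk0 hk
        refine hkey10 j e.symm ?_
        intro a b
        apply e.injective
        rw [e.apply_symm_apply, hcirc (e.symm a) (e.symm b), e.apply_symm_apply,
          e.apply_symm_apply]
      · -- both of shape (·, 1) with j ≠ j'
        subst hk hk'
        have hjj' : j ≠ j' := fun h => hne (by rw [h])
        -- e is additive, analyse its shape
        have e0 : e 0 = 0 := by
          have h := hadd 0 0
          rw [add_zero] at h
          exact (add_eq_left.mp h.symm)
        have hsmul : ∀ (n : ℕ) (x : ZMod (p^2) × ZMod q), e (n • x) = n • e x := by
          intro n x
          induction n with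
          | zero => simpa [zero_nsmul] using e0
          | succ n ih => rw [succ_nsmul, hadd, ih, succ_nsmul]
        have hsnd10 : (e (1, 0)).2 = 0 := by
          have hz1 : (p^2 : ℕ) • ((1 : ZMod (p^2)), (0 : ZMod q)) = 0 := by
            refine Prod.ext ?_ ?_
            · show (p^2 : ℕ) • (1 : ZMod (p^2)) = 0
              rw [nsmul_eq_mul, mul_one, ZMod.natCast_self]
            · show (p^2 : ℕ) • (0 : ZMod q) = 0
              simp
          have h := hsmul (p^2) (1, 0)
          rw [hz1, e0] at h
          have h2 := congrArg Prod.snd h.symm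
          simp only [Prod.snd_zero] at h2
          rw [Prod.smul_snd, nsmul_eq_mul] at h2
          have hq2 : ((p^2 : ℕ) : ZMod q) ≠ 0 := by
            intro hcast
            have hdd := (ZMod.natCast_eq_zero_iff _ _).mp hcast
            have := hq.dvd_of_dvd_pow hdd
            exact hpq ((Nat.prime_dvd_prime_iff_eq hq hp).mp this).symm
          rcases mul_eq_zero.mp h2 with h3 | h3
          · exact absurd h3 hq2
          · exact h3
        have hfst01 : (e (0, 1)).1 = 0 := by
          have hz1 : (q : ℕ) • ((0 : ZMod (p^2)), (1 : ZMod q)) = 0 := by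
            refine Prod.ext ?_ ?_
            · show (q : ℕ) • (0 : ZMod (p^2)) = 0
              simp
            · show (q : ℕ) • (1 : ZMod q) = 0
              rw [nsmul_eq_mul, mul_one, ZMod.natCast_self]
          have h := hsmul q (0, 1)
          rw [hz1, e0] at h
          have h2 := congrArg Prod.fst h.symm
          simp only [Prod.fst_zero] at h2
          rw [Prod.smul_fst, nsmul_eq_mul] at h2
          have hu : IsUnit ((q : ℕ) : ZMod (p^2)) := by
            rw [ZMod.isUnit_iff_coprime]
            exact (((Nat.coprime_primes hq hp).mpr hpq.symm).pow_right 2)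
          exact (hu.mul_right_eq_zero).mp h2
        set c : ZMod (p^2) := (e (1, 0)).1 with hc
        set d : ZMod q := (e (0, 1)).2 with hd
        have hesplit : ∀ x : ZMod (p^2) × ZMod q, e x = (x.1 * c, x.2 * d) := by
          intro x
          have hx : x = x.1.val • ((1 : ZMod (p^2)), (0 : ZMod q))
              + x.2.val • ((0 : ZMod (p^2)), (1 : ZMod q)) := by
            refine Prod.ext ?_ ?_
            · show x.1 = x.1.val • (1 : ZMod (p^2)) + x.2.val • (0 : ZMod (p^2))
              simp only [smul_zero, add_zero, nsmul_eq_mul, mul_one]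
              exact (ZMod.natCast_rightInverse x.1).symm
            · show x.2 = x.1.val • (0 : ZMod q) + x.2.val • (1 : ZMod q)
              simp only [smul_zero, zero_add, nsmul_eq_mul, mul_one]
              exact (ZMod.natCast_rightInverse x.2).symm
          conv_lhs => rw [hx]
          rw [hadd, hsmul, hsmul]
          have he10 : e (1, 0) = (c, 0) := Prod.ext rfl hsnd10
          have he01 : e (0, 1) = (0, d) := Prod.ext hfst01 rfl
          rw [he10, he01]
          refine Prod.ext ?_ ?_
          · show x.1.val • c + x.2.val • (0 : ZMod (p^2)) = x.1 * c
            simp only [smul_zero, add_zero, nsmul_eq_mul]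
            rw [ZMod.natCast_rightInverse x.1]
          · show x.1.val • (0 : ZMod q) + x.2.val • d = x.2 * d
            simp only [smul_zero, zero_add, nsmul_eq_mul]
            rw [ZMod.natCast_rightInverse x.2]
        -- c and d are units
        obtain ⟨w, hw⟩ := e.surjective (1, 1)
        rw [hesplit w] at hw
        have hcunit : IsUnit c := IsUnit.of_mul_eq_one (a := c) w.1
          (by rw [mul_comm]; exact congrArg Prod.fst hw)
        have hdunit : IsUnit d := IsUnit.of_mul_eq_one (a := d) w.2
          (by rw [mul_comm]; exact congrArg Prod.snd hw)
        -- first relation : c ≡ 1 mod p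
        have h1 := hcirc (1, 0) (0, 1)
        rw [hesplit (circ15 p q r j 1 (1, 0) (0, 1)), hesplit (1, 0), hesplit (0, 1)] at h1
        unfold circ15 at h1
        have h1s := congrArg Prod.snd h1
        simp only [one_mul, mul_one, zero_mul, mul_zero, zero_add,
          add_zero, hval1, pow_one] at h1s
        -- h1s : ↑r * d = ↑r ^ c.val * d
        have hrval : (r : ZMod q) = (r : ZMod q) ^ c.val := hdunit.mul_right_cancel h1s
        have hrcu : r ^ (1 : ℕ) = r ^ c.val := Units.ext
          (by rw [Units.val_pow_eq_pow_val, Units.val_pow_eq_pow_val, pow_one]; exact hrval)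
        have hc1 : (1 : ℕ) ≡ c.val [MOD p] := by
          have h5 := pow_eq_pow_iff_modEq.mp hrcu
          rwa [hr] at h5
        have hπc : π c = 1 := by
          rw [← hπval c, (ZMod.natCast_eq_natCast_iff _ _ _).mpr hc1.symm, Nat.cast_one]
        -- second relation : j ≡ j' c mod p
        have h2 := hcirc (1, 0) (1, 0)
        rw [hesplit (circ15 p q r j 1 (1, 0) (1, 0)), hesplit (1, 0)] at h2
        unfold circ15 at h2
        have h2f := congrArg Prod.fst h2
        simp only [one_mul, mul_one] at h2f
        have hp2 : (p : ZMod (p^2)) * ((j : ZMod (p^2)) * c - (j' : ZMod (p^2)) * c^2) = 0 := by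
          linear_combination h2f
        have hπ2 := hpmul _ hp2
        rw [map_sub, map_mul, map_mul, map_pow, map_natCast, map_natCast, hπc] at hπ2
        have hjp : (j : ZMod p) = (j' : ZMod p) := by
          rw [mul_one, one_pow, mul_one, sub_eq_zero] at hπ2
          exact hπ2
        have hmodjj : j ≡ j' [MOD p] := (ZMod.natCast_eq_natCast_iff _ _ _).mp hjp
        have hfin : j = j' := by
          have := hmodjj
          unfold Nat.ModEq at this
          rwa [Nat.mod_eq_of_lt (by omega), Nat.mod_eq_of_lt (by omega)] at this
        exact hjj' hfin
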